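/- For n ≥ 4, let Iₙ ⊂ K[x₁,...,xₙ] be generated by the n−1 monomials m_i^(n) = (x₁⋯xₙ)/(x_{n−i}x_{n−i+1}) for i = 1,...,n−1. Define q₁^(4) = m₂^(4), q₂^(4) = m₁^(4) + m₃^(4), q_j^(5) = x₅q_j^(4) − c_j m₁^(5) (with c₁ = x₁x₂, c₂ = x₂x₃), and recursively q_j^(n+1) = x_{n+1}q_j^(n) − x_{n−2}^{n−3} q_j^(n−1) m₁^(n+1) for n ≥ 5, j = 1,2. Then √((q₁^(n), q₂^(n))) = √(Iₙ) for all n ≥ 4. -/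

import Mathlib

set_option synthInstance.maxHeartbeats 1000000
set_option maxHeartbeats 1000000

open MvPolynomial Ideal CategoryTheory

noncomputable section

/-- The arithmetical rank of an ideal: the least `r` such that some `r` elements
generate `I` up to radical. -/
noncomputable def ara {R : Type*} [CommRing R] (I : Ideal R) : ℕ :=
  sInf {r | ∃ a : Fin r → R, Ideal.radical (Ideal.span (Set.range a)) = Ideal.radical I}

/-- The height of an ideal: the infimum of the heights of the primes containing it. -/
noncomputable def idealHeight {R : Type*} [CommRing R] (I : Ideal R) : ℕ∞ :=
  ⨅ (P : PrimeSpectrum R) (_ : I ≤ P.asIdeal), Order.height P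

/-- `m_i^{(n)} = (x₁⋯xₙ)/(x_{n-i}x_{n-i+1})`, as a polynomial in `K[x₁, x₂, …]`. -/
def mgen (K : Type*) [Field K] (i n : ℕ) : MvPolynomial ℕ K :=
  ∏ k ∈ Finset.Icc 1 n \ {n - i, n - i + 1}, X k

/-- The ideal `Iₙ = (m₁^{(n)}, …, m_{n-1}^{(n)})`. -/
def In (K : Type*) [Field K] (n : ℕ) : Ideal (MvPolynomial ℕ K) :=
  Ideal.span {p | ∃ i, 1 ≤ i ∧ i ≤ n - 1 ∧ p = mgen K i n}

/-- The recursively defined first generator `q₁^{(n)}`. -/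
def q1 (K : Type*) [Field K] : ℕ → MvPolynomial ℕ K
  | 4 => mgen K 2 4
  | 5 => X 5 * mgen K 2 4 - X 1 * X 2 * mgen K 1 5
  | (n + 6) => X (n + 6) * q1 K (n + 5) - X (n + 3) ^ (n + 2) * q1 K (n + 4) * mgen K 1 (n + 6)
  | _ => 0

/-- The recursively defined second generator `q₂^{(n)}`. -/
def q2 (K : Type*) [Field K] : ℕ → MvPolynomial ℕ K
  | 4 => mgen K 1 4 + mgen K 3 4
  | 5 => X 5 * (mgen K 1 4 + mgen K 3 4) - X 2 * X 3 * mgen K 1 5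
  | (n + 6) => X (n + 6) * q2 K (n + 5) - X (n + 3) ^ (n + 2) * q2 K (n + 4) * mgen K 1 (n + 6)
  | _ => 0

section Aux

variable (K : Type*) [Field K]

lemma mgen_one (n : ℕ) (h : 2 ≤ n) : mgen K 1 n = ∏ k ∈ Finset.Icc 1 (n-2), X k := by
  rw [mgen]
  congr 1
  ext k
  simp only [Finset.mem_sdiff, Finset.mem_Icc, Finset.mem_insert, Finset.mem_singleton]
  omega

lemma mgen_succ (i n : ℕ) (hi : 1 ≤ i) (hn : 1 ≤ n) :
    mgen K (i+1) (n+1) = X (n+1) * mgen K i n := by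
  rw [mgen, mgen, show n+1-(i+1) = n - i from by omega]
  rw [show Finset.Icc 1 (n+1) \ ({n-i, n-i+1} : Finset ℕ)
      = insert (n+1) (Finset.Icc 1 n \ ({n-i, n-i+1} : Finset ℕ)) from by
    ext k
    simp only [Finset.mem_sdiff, Finset.mem_Icc, Finset.mem_insert, Finset.mem_singleton]
    omega]
  rw [Finset.prod_insert (by simp only [Finset.mem_sdiff, Finset.mem_Icc]; omega)]

lemma X_dvd_mgen (i n t : ℕ) (h1 : 1 ≤ t) (h2 : t ≤ n) (h3 : t ≠ n - i) (h4 : t ≠ n - i + 1) :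
    X t ∣ mgen K i n :=
  Finset.dvd_prod_of_mem _ (by
    simp only [Finset.mem_sdiff, Finset.mem_Icc, Finset.mem_insert, Finset.mem_singleton]
    omega)

lemma mgen_pair (i n a b : ℕ) (hset : Finset.Icc 1 n \ {n - i, n - i + 1} = ({a, b} : Finset ℕ))
    (hab : a ≠ b) : mgen K i n = X a * X b := by
  rw [mgen, hset, Finset.prod_pair hab]

lemma mgen14 : mgen K 1 4 = X 1 * X 2 := mgen_pair K 1 4 1 2 (by decide) (by norm_num)
lemma mgen24 : mgen K 2 4 = X 1 * X 4 := mgen_pair K 2 4 1 4 (by decide) (by norm_num)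
lemma mgen34 : mgen K 3 4 = X 3 * X 4 := mgen_pair K 3 4 3 4 (by decide) (by norm_num)

lemma mgen_triple (i n a b c : ℕ)
    (hset : Finset.Icc 1 n \ {n - i, n - i + 1} = ({a, b, c} : Finset ℕ))
    (h1 : a ≠ b) (h2 : a ≠ c) (h3 : b ≠ c) : mgen K i n = X a * (X b * X c) := by
  rw [mgen, hset, Finset.prod_insert (by simp [h1, h2]), Finset.prod_pair h3]

lemma mgen15 : mgen K 1 5 = X 1 * (X 2 * X 3) := mgen_triple K 1 5 1 2 3 (by decide) (by norm_num) (by norm_num) (by norm_num)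
lemma mgen25 : mgen K 2 5 = X 1 * (X 2 * X 5) := mgen_triple K 2 5 1 2 5 (by decide) (by norm_num) (by norm_num) (by norm_num)
lemma mgen35 : mgen K 3 5 = X 1 * (X 4 * X 5) := mgen_triple K 3 5 1 4 5 (by decide) (by norm_num) (by norm_num) (by norm_num)
lemma mgen45 : mgen K 4 5 = X 3 * (X 4 * X 5) := mgen_triple K 4 5 3 4 5 (by decide) (by norm_num) (by norm_num) (by norm_num)

lemma q1_4 : q1 K 4 = mgen K 2 4 := rfl
lemma q2_4 : q2 K 4 = mgen K 1 4 + mgen K 3 4 := rfl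
lemma q1_5 : q1 K 5 = X 5 * mgen K 2 4 - X 1 * X 2 * mgen K 1 5 := rfl
lemma q2_5 : q2 K 5 = X 5 * (mgen K 1 4 + mgen K 3 4) - X 2 * X 3 * mgen K 1 5 := rfl
lemma q1_eq (n : ℕ) : q1 K (n+6) = X (n+6) * q1 K (n+5) - X (n+3) ^ (n+2) * q1 K (n+4) * mgen K 1 (n+6) := rfl
lemma q2_eq (n : ℕ) : q2 K (n+6) = X (n+6) * q2 K (n+5) - X (n+3) ^ (n+2) * q2 K (n+4) * mgen K 1 (n+6) := rfl

/-- `Wr K n` is the Wronskian `W_{n+5} = q₁⁽ⁿ⁺⁵⁾q₂⁽ⁿ⁺⁴⁾ − q₂⁽ⁿ⁺⁵⁾q₁⁽ⁿ⁺⁴⁾`. -/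
def Wr (n : ℕ) : MvPolynomial ℕ K :=
  q1 K (n+5) * q2 K (n+4) - q2 K (n+5) * q1 K (n+4)

lemma Wr_zero : Wr K 0 = -(X 1 ^ 3 * X 2 ^ 3 * X 3) := by
  rw [Wr, q1_5, q2_5, q1_4, q2_4, mgen14, mgen24, mgen34, mgen15]
  ring

lemma Wr_succ (n : ℕ) : Wr K (n+1) = X (n+3) ^ (n+2) * mgen K 1 (n+6) * Wr K n := by
  rw [Wr, Wr, show n+1+5 = n+6 from rfl, show n+1+4 = n+5 from rfl, q1_eq, q2_eq]
  ring

lemma key_identity (n : ℕ) :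
    q1 K (n+6) * q2 K (n+4) - q2 K (n+6) * q1 K (n+4) = X (n+6) * Wr K n := by
  rw [q1_eq, q2_eq, Wr]; ring

lemma mem_of_dvd' {P : Ideal (MvPolynomial ℕ K)} {d p : MvPolynomial ℕ K}
    (h : d ∈ P) (hd : d ∣ p) : p ∈ P := by
  obtain ⟨c, rfl⟩ := hd; exact P.mul_mem_right c h

lemma Wr_mem (n : ℕ) (P : Ideal (MvPolynomial ℕ K)) (hP : P.IsPrime) (h : Wr K n ∈ P) :
    ∃ k, 1 ≤ k ∧ k ≤ n + 3 ∧ X k ∈ P := by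
  induction n with
  | zero =>
    rw [Wr_zero, neg_mem_iff] at h
    rcases hP.mem_or_mem h with h' | h3
    · rcases hP.mem_or_mem h' with h1 | h2
      · exact ⟨1, le_refl _, by omega, hP.mem_of_pow_mem _ h1⟩
      · exact ⟨2, by omega, by omega, hP.mem_of_pow_mem _ h2⟩
    · exact ⟨3, by omega, by omega, h3⟩
  | succ n ih =>
    rw [Wr_succ] at h
    rcases hP.mem_or_mem h with h' | hw
    · rcases hP.mem_or_mem h' with hpow | hm
      · exact ⟨n+3, by omega, by omega, hP.mem_of_pow_mem _ hpow⟩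
      · rw [mgen_one K (n+6) (by omega)] at hm
        obtain ⟨k, hk, hXk⟩ := Ideal.IsPrime.prod_mem_iff.mp hm
        rw [Finset.mem_Icc] at hk
        exact ⟨k, hk.1, by omega, hXk⟩
    · obtain ⟨k, h1, h2, h3⟩ := ih hw
      exact ⟨k, h1, by omega, h3⟩

lemma main4 (P : Ideal (MvPolynomial ℕ K)) (hP : P.IsPrime)
    (h1 : q1 K 4 ∈ P) (h2 : q2 K 4 ∈ P) :
    ∀ i, 1 ≤ i → i ≤ 4 - 1 → mgen K i 4 ∈ P := by
  rw [q1_4] at h1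
  rw [q2_4] at h2
  have hprod : mgen K 1 4 * mgen K 3 4 ∈ P := by
    have e : mgen K 1 4 * mgen K 3 4 = (X 2 * X 3) * mgen K 2 4 := by
      rw [mgen14, mgen24, mgen34]; ring
    rw [e]; exact P.mul_mem_left _ h1
  have hpair : mgen K 1 4 ∈ P ∧ mgen K 3 4 ∈ P := by
    rcases hP.mem_or_mem hprod with h | h
    · refine ⟨h, ?_⟩
      have e : mgen K 3 4 = mgen K 1 4 + mgen K 3 4 - mgen K 1 4 := by ring
      rw [e]; exact sub_mem h2 h
    · refine ⟨?_, h⟩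
      have e : mgen K 1 4 = mgen K 1 4 + mgen K 3 4 - mgen K 3 4 := by ring
      rw [e]; exact sub_mem h2 h
  intro i hi1 hi2
  interval_cases i
  · exact hpair.1
  · exact h1
  · exact hpair.2

lemma main5_of_x1 (P : Ideal (MvPolynomial ℕ K)) (hP : P.IsPrime)
    (h2 : q2 K 5 ∈ P) (hx1 : X 1 ∈ P) :
    ∀ i, 1 ≤ i → i ≤ 5 - 1 → mgen K i 5 ∈ P := by
  have hm1 : mgen K 1 5 ∈ P := mem_of_dvd' K hx1 ⟨X 2 * X 3, by rw [mgen15]⟩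
  have hm2 : mgen K 2 5 ∈ P := mem_of_dvd' K hx1 ⟨X 2 * X 5, by rw [mgen25]⟩
  have hm3 : mgen K 3 5 ∈ P := mem_of_dvd' K hx1 ⟨X 4 * X 5, by rw [mgen35]⟩
  have hm4 : mgen K 4 5 ∈ P := by
    have e : mgen K 4 5 = q2 K 5 - mgen K 2 5 + X 2 * X 3 * mgen K 1 5 := by
      rw [q2_5, mgen14, mgen34, mgen15, mgen25, mgen45]; ring
    rw [e]
    exact add_mem (sub_mem h2 hm2) (P.mul_mem_left _ hm1)
  intro i hi1 hi2
  interval_cases i <;> assumption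

lemma main5 (P : Ideal (MvPolynomial ℕ K)) (hP : P.IsPrime)
    (h1 : q1 K 5 ∈ P) (h2 : q2 K 5 ∈ P) :
    ∀ i, 1 ≤ i → i ≤ 5 - 1 → mgen K i 5 ∈ P := by
  have e1 : q1 K 5 = X 1 * (X 4 * X 5 - X 1 * (X 2 ^ 2 * X 3)) := by
    rw [q1_5, mgen24, mgen15]; ring
  rw [e1] at h1
  rcases hP.mem_or_mem h1 with hx1 | hr
  · exact main5_of_x1 K P hP h2 hx1
  · -- r := X 4 * X 5 - X 1 * (X 2 ^ 2 * X 3) ∈ P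
    have h125 : X 1 * (X 2 * X 5) ∈ P := by
      have e : X 1 * (X 2 * X 5)
          = q2 K 5 - X 3 * (X 4 * X 5 - X 1 * (X 2 ^ 2 * X 3)) := by
        rw [q2_5, mgen14, mgen34, mgen15]; ring
      rw [e]; exact sub_mem h2 (P.mul_mem_left _ hr)
    rcases hP.mem_or_mem h125 with hx1 | h25
    · exact main5_of_x1 K P hP h2 hx1
    rcases hP.mem_or_mem h25 with hx2 | hx5
    · -- X 2 ∈ P
      have hm1 : mgen K 1 5 ∈ P := mem_of_dvd' K hx2 ⟨X 1 * X 3, by rw [mgen15]; ring⟩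
      have hm2 : mgen K 2 5 ∈ P := mem_of_dvd' K hx2 ⟨X 1 * X 5, by rw [mgen25]; ring⟩
      have hm3 : mgen K 3 5 ∈ P := by
        have e : mgen K 3 5 = X 1 * (X 4 * X 5 - X 1 * (X 2 ^ 2 * X 3))
            + X 2 * (X 1 ^ 2 * (X 2 * X 3)) := by rw [mgen35]; ring
        rw [e]; exact add_mem (P.mul_mem_left _ hr) (P.mul_mem_right _ hx2)
      have hm4 : mgen K 4 5 ∈ P := by
        have e : mgen K 4 5 = X 3 * (X 4 * X 5 - X 1 * (X 2 ^ 2 * X 3))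
            + X 2 * (X 1 * (X 2 * X 3 ^ 2)) := by rw [mgen45]; ring
        rw [e]; exact add_mem (P.mul_mem_left _ hr) (P.mul_mem_right _ hx2)
      intro i hi1 hi2
      interval_cases i <;> assumption
    · -- X 5 ∈ P
      have hm2 : mgen K 2 5 ∈ P := mem_of_dvd' K hx5 ⟨X 1 * X 2, by rw [mgen25]; ring⟩
      have hm3 : mgen K 3 5 ∈ P := mem_of_dvd' K hx5 ⟨X 1 * X 4, by rw [mgen35]; ring⟩
      have hm4 : mgen K 4 5 ∈ P := mem_of_dvd' K hx5 ⟨X 3 * X 4, by rw [mgen45]; ring⟩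
      have hbig : X 1 * (X 2 ^ 2 * X 3) ∈ P := by
        have e : (X 1 * (X 2 ^ 2 * X 3) : MvPolynomial ℕ K)
            = X 4 * X 5 - (X 4 * X 5 - X 1 * (X 2 ^ 2 * X 3)) := by ring
        rw [e]; exact sub_mem (P.mul_mem_left _ hx5) hr
      have hm1 : mgen K 1 5 ∈ P := by
        rcases hP.mem_or_mem hbig with hx1 | h23
        · exact mem_of_dvd' K hx1 ⟨X 2 * X 3, by rw [mgen15]⟩
        rcases hP.mem_or_mem h23 with hx2 | hx3
        · exact mem_of_dvd' K (hP.mem_of_pow_mem _ hx2) ⟨X 1 * X 3, by rw [mgen15]; ring⟩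
        · exact mem_of_dvd' K hx3 ⟨X 1 * X 2, by rw [mgen15]; ring⟩
      intro i hi1 hi2
      interval_cases i
      exacts [hm1, hm2, hm3, hm4]

lemma main : ∀ n : ℕ, 4 ≤ n → ∀ P : Ideal (MvPolynomial ℕ K), P.IsPrime →
    q1 K n ∈ P → q2 K n ∈ P → ∀ i, 1 ≤ i → i ≤ n - 1 → mgen K i n ∈ P := by
  intro n
  induction n using Nat.strong_induction_on with
  | _ n ih =>
    intro hn P hP h1 h2
    obtain rfl | rfl | ⟨m, rfl⟩ : n = 4 ∨ n = 5 ∨ ∃ m, n = m + 6 := by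
      rcases Nat.lt_or_ge n 6 with h | h
      · omega
      · exact Or.inr (Or.inr ⟨n - 6, by omega⟩)
    · exact main4 K P hP h1 h2
    · exact main5 K P hP h1 h2
    · -- inductive step, n = m + 6
      have key : X (m+6) * Wr K m ∈ P := by
        rw [← key_identity]
        exact sub_mem (P.mul_mem_right _ h1) (P.mul_mem_right _ h2)
      -- Step 1 : mgen K 1 (m+6) ∈ P
      have hM : mgen K 1 (m+6) ∈ P := by
        rcases hP.mem_or_mem key with hx | hw
        · -- X (m+6) ∈ P
          have g1 : X (m+3) ^ (m+2) * q1 K (m+4) * mgen K 1 (m+6) ∈ P := by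
            have e : X (m+3) ^ (m+2) * q1 K (m+4) * mgen K 1 (m+6)
                = X (m+6) * q1 K (m+5) - q1 K (m+6) := by rw [q1_eq]; ring
            rw [e]; exact sub_mem (P.mul_mem_right _ hx) h1
          have g2 : X (m+3) ^ (m+2) * q2 K (m+4) * mgen K 1 (m+6) ∈ P := by
            have e : X (m+3) ^ (m+2) * q2 K (m+4) * mgen K 1 (m+6)
                = X (m+6) * q2 K (m+5) - q2 K (m+6) := by rw [q2_eq]; ring
            rw [e]; exact sub_mem (P.mul_mem_right _ hx) h2
          have hx3M : X (m+3) ∈ P → mgen K 1 (m+6) ∈ P := fun h =>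
            mem_of_dvd' K h (X_dvd_mgen K 1 (m+6) (m+3) (by omega) (by omega) (by omega) (by omega))
          rcases hP.mem_or_mem g1 with hg1 | hMem
          · rcases hP.mem_or_mem hg1 with hpow | hq1'
            · exact hx3M (hP.mem_of_pow_mem _ hpow)
            · rcases hP.mem_or_mem g2 with hg2 | hMem2
              · rcases hP.mem_or_mem hg2 with hpow | hq2'
                · exact hx3M (hP.mem_of_pow_mem _ hpow)
                · -- both q1 K (m+4), q2 K (m+4) ∈ P; apply ih at m+4
                  have h14 : mgen K 1 (m+4) ∈ P :=
                    ih (m+4) (by omega) (by omega) P hP hq1' hq2' 1 le_rfl (by omega)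
                  refine mem_of_dvd' K h14 ?_
                  rw [mgen_one K (m+4) (by omega), mgen_one K (m+6) (by omega)]
                  exact Finset.prod_dvd_prod_of_subset _ _ _
                    (Finset.Icc_subset_Icc le_rfl (by omega))
              · exact hMem2
          · exact hMem
        · -- Wr K m ∈ P
          obtain ⟨k, hk1, hk3, hXk⟩ := Wr_mem K m P hP hw
          exact mem_of_dvd' K hXk
            (X_dvd_mgen K 1 (m+6) k hk1 (by omega) (by omega) (by omega))
      -- Step 2
      intro i hi1 hi2
      rcases Nat.eq_or_lt_of_le hi1 with rfl | hi2'
      · exact hM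
      · -- 2 ≤ i
        by_cases hx : X (m+6) ∈ P
        · exact mem_of_dvd' K hx
            (X_dvd_mgen K i (m+6) (m+6) (by omega) (by omega) (by omega) (by omega))
        · have hq1 : q1 K (m+5) ∈ P := by
            have e : X (m+6) * q1 K (m+5)
                = q1 K (m+6) + X (m+3) ^ (m+2) * q1 K (m+4) * mgen K 1 (m+6) := by
              rw [q1_eq]; ring
            have hmem : X (m+6) * q1 K (m+5) ∈ P := by
              rw [e]; exact add_mem h1 (P.mul_mem_left _ hM)
            exact (hP.mem_or_mem hmem).resolve_left hx
          have hq2 : q2 K (m+5) ∈ P := by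
            have e : X (m+6) * q2 K (m+5)
                = q2 K (m+6) + X (m+3) ^ (m+2) * q2 K (m+4) * mgen K 1 (m+6) := by
              rw [q2_eq]; ring
            have hmem : X (m+6) * q2 K (m+5) ∈ P := by
              rw [e]; exact add_mem h2 (P.mul_mem_left _ hM)
            exact (hP.mem_or_mem hmem).resolve_left hx
          obtain ⟨j, rfl⟩ : ∃ j, i = j + 1 := ⟨i - 1, by omega⟩
          have hj : mgen K j (m+5) ∈ P :=
            ih (m+5) (by omega) (by omega) P hP hq1 hq2 j (by omega) (by omega)
          rw [show m+6 = (m+5)+1 from rfl, mgen_succ K j (m+5) (by omega) (by omega)]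
          exact P.mul_mem_left _ hj

lemma mgen_mem_In (i n : ℕ) (h1 : 1 ≤ i) (h2 : i ≤ n - 1) : mgen K i n ∈ In K n :=
  Ideal.subset_span ⟨i, h1, h2, rfl⟩

lemma mul_X_mem_In (n : ℕ) (hn : 1 ≤ n) (p : MvPolynomial ℕ K) (hp : p ∈ In K n) :
    X (n+1) * p ∈ In K (n+1) := by
  refine Submodule.span_induction (p := fun x _ => X (n+1) * x ∈ In K (n+1))
    ?_ ?_ ?_ ?_ hp
  · rintro x ⟨i, hi1, hi2, rfl⟩
    rw [← mgen_succ K i n hi1 hn]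
    exact mgen_mem_In K (i+1) (n+1) (by omega) (by omega)
  · show X (n+1) * 0 ∈ In K (n+1)
    rw [mul_zero]; exact zero_mem _
  · intro x y _ _ hx hy
    show X (n+1) * (x + y) ∈ In K (n+1)
    rw [mul_add]; exact add_mem hx hy
  · intro a x _ hx
    show X (n+1) * (a • x) ∈ In K (n+1)
    rw [smul_eq_mul, show X (n+1) * (a * x) = a * (X (n+1) * x) from by ring]
    exact Ideal.mul_mem_left _ _ hx

lemma q_mem_In : ∀ n : ℕ, 4 ≤ n → q1 K n ∈ In K n ∧ q2 K n ∈ In K n := by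
  intro n
  induction n using Nat.strong_induction_on with
  | _ n ih =>
    intro hn
    obtain rfl | rfl | ⟨m, rfl⟩ : n = 4 ∨ n = 5 ∨ ∃ m, n = m + 6 := by
      rcases Nat.lt_or_ge n 6 with h | h
      · omega
      · exact Or.inr (Or.inr ⟨n - 6, by omega⟩)
    · constructor
      · rw [q1_4]; exact mgen_mem_In K 2 4 (by omega) (by omega)
      · rw [q2_4]
        exact add_mem (mgen_mem_In K 1 4 (by omega) (by omega))
          (mgen_mem_In K 3 4 (by omega) (by omega))
    · constructor
      · rw [q1_5, show (5:ℕ) = 4 + 1 from rfl, ← mgen_succ K 2 4 (by omega) (by omega)]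
        exact sub_mem (mgen_mem_In K 3 5 (by omega) (by omega))
          (Ideal.mul_mem_left _ _ (mgen_mem_In K 1 5 (by omega) (by omega)))
      · rw [q2_5, mul_add, show (5:ℕ) = 4 + 1 from rfl,
          ← mgen_succ K 1 4 (by omega) (by omega), ← mgen_succ K 3 4 (by omega) (by omega)]
        exact sub_mem
          (add_mem (mgen_mem_In K 2 5 (by omega) (by omega))
            (mgen_mem_In K 4 5 (by omega) (by omega)))
          (Ideal.mul_mem_left _ _ (mgen_mem_In K 1 5 (by omega) (by omega)))
    · obtain ⟨ih1, ih2⟩ := ih (m+5) (by omega) (by omega)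
      constructor
      · rw [q1_eq]
        exact sub_mem (mul_X_mem_In K (m+5) (by omega) _ ih1)
          (Ideal.mul_mem_left _ _ (mgen_mem_In K 1 (m+6) (by omega) (by omega)))
      · rw [q2_eq]
        exact sub_mem (mul_X_mem_In K (m+5) (by omega) _ ih2)
          (Ideal.mul_mem_left _ _ (mgen_mem_In K 1 (m+6) (by omega) (by omega)))

end Aux

/-- For every `n ≥ 4`, the two elements `q₁^{(n)}, q₂^{(n)}` generate `Iₙ` up to
radical. -/
theorem stmt13 (K : Type*) [Field K] (n : ℕ) (hn : 4 ≤ n) :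
    Ideal.radical (Ideal.span {q1 K n, q2 K n}) = Ideal.radical (In K n) := by
  apply le_antisymm
  · apply Ideal.radical_mono
    rw [Ideal.span_le]
    rintro p (rfl | rfl)
    · exact (q_mem_In K n hn).1
    · exact (q_mem_In K n hn).2
  · have h : In K n ≤ Ideal.radical (Ideal.span {q1 K n, q2 K n}) := by
      rw [In, Ideal.span_le]
      rintro p ⟨i, hi1, hi2, rfl⟩
      rw [SetLike.mem_coe, Ideal.radical_eq_sInf]
      rw [Ideal.mem_sInf]
      rintro J ⟨hle, hJ⟩
      exact main K n hn J hJ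
        (hle (Ideal.subset_span (Set.mem_insert _ _)))
        (hle (Ideal.subset_span (Set.mem_insert_of_mem _ rfl))) i hi1 hi2
    calc Ideal.radical (In K n)
        ≤ Ideal.radical (Ideal.radical (Ideal.span {q1 K n, q2 K n})) := Ideal.radical_mono h
      _ = Ideal.radical (Ideal.span {q1 K n, q2 K n}) := Ideal.radical_idem _
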